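/- Let u : [0,ε] × [T, T+δ] → ℝ be continuous, C² in x and C¹ in t on the interior, satisfying u_t = u_xx / (1 + (u_x)²). If u(x,T) ≥ 0 for all x ∈ [0,ε], u(0,t) > 0 for all t ∈ (T, T+δ], and u(ε,t) > 0 for all t ∈ [T, T+δ], then u(x,t) > 0 for all (x,t) ∈ (0,ε) × (T, T+δ]. -/

import Mathlib

open Set

open Filter Topology

/-- At an interior local minimum of a (twice differentiable) function,
the second derivative is nonnegative. -/
lemma second_deriv_nonneg_of_isLocalMin {f : ℝ → ℝ} {a : ℝ}
    (hmin : IsLocalMin f a)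
    (hd : ∀ᶠ x in 𝓝 a, DifferentiableAt ℝ f x)
    (hd2 : DifferentiableAt ℝ (deriv f) a) :
    0 ≤ deriv (deriv f) a := by
  by_contra hcon
  push_neg at hcon
  have h1 : deriv f a = 0 := hmin.deriv_eq_zero
  have hslope : Tendsto (slope (deriv f) a) (𝓝[≠] a) (𝓝 (deriv (deriv f) a)) :=
    hasDerivAt_iff_tendsto_slope.1 hd2.hasDerivAt
  have hneg : ∀ᶠ x in 𝓝[≠] a, slope (deriv f) a x < 0 :=
    hslope.eventually (eventually_lt_nhds hcon)
  have hneg' : ∀ᶠ x in 𝓝[>] a, deriv f x < 0 := by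
    filter_upwards [hneg.filter_mono (nhdsWithin_mono _ fun x hx => ne_of_gt hx),
      eventually_mem_nhdsWithin] with x hx hx'
    rw [slope_def_field, h1, sub_zero] at hx
    by_contra hge
    push_neg at hge
    exact absurd (div_nonneg hge (by simpa using (sub_pos.2 (mem_Ioi.1 hx')).le)) (not_le.2 hx)
  obtain ⟨s, hs, hsub⟩ := mem_nhdsGT_iff_exists_Ioo_subset.1 hneg'
  obtain ⟨r, hr, hball⟩ := Metric.eventually_nhds_iff.1 (hd.and hmin)
  set b := min (a + r / 2) ((a + s) / 2) with hb
  have hab : a < b := by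
    have := mem_Ioi.1 hs
    simp only [hb, lt_min_iff]
    constructor <;> linarith
  have hbr : ∀ x ∈ Icc a b, dist x a < r := by
    intro x hx
    rw [Real.dist_eq, abs_of_nonneg (by linarith [hx.1])]
    have : b ≤ a + r / 2 := min_le_left _ _
    linarith [hx.2]
  have hanti : StrictAntiOn f (Icc a b) := by
    apply strictAntiOn_of_deriv_neg (convex_Icc a b)
    · intro x hx
      exact ((hball (hbr x hx)).1).continuousAt.continuousWithinAt
    · intro x hx
      rw [interior_Icc] at hx
      apply hsub
      have : b ≤ (a + s) / 2 := min_le_right _ _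
      exact ⟨hx.1, by nlinarith [hx.2, mem_Ioi.1 hs]⟩
  have h5 : f b < f a := hanti (left_mem_Icc.2 hab.le) (right_mem_Icc.2 hab.le) hab
  have h6 : f a ≤ f b := (hball (hbr b (right_mem_Icc.2 hab.le))).2
  linarith

lemma deriv_nonpos_of_isMinOn_Ioc {f : ℝ → ℝ} {a b : ℝ} (hab : a < b)
    (hf : DifferentiableAt ℝ f b) (hmin : ∀ s ∈ Ioc a b, f b ≤ f s) :
    deriv f b ≤ 0 := by
  haveI : (𝓝[Ioo a b] b).NeBot := right_nhdsWithin_Ioo_neBot hab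
  have hslope : Tendsto (slope f b) (𝓝[≠] b) (𝓝 (deriv f b)) :=
    hasDerivAt_iff_tendsto_slope.1 hf.hasDerivAt
  have h2 : Tendsto (slope f b) (𝓝[Ioo a b] b) (𝓝 (deriv f b)) :=
    hslope.mono_left (nhdsWithin_mono _ (fun x hx => ne_of_lt hx.2))
  refine le_of_tendsto h2 ?_
  filter_upwards [eventually_mem_nhdsWithin] with x hx
  have h3 : f b ≤ f x := hmin x ⟨hx.1, hx.2.le⟩
  rw [slope_def_field]
  exact div_nonpos_of_nonneg_of_nonpos (by linarith) (by linarith [hx.2])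

set_option maxHeartbeats 1600000 in
/-- Maximum principle for the graphical curve shortening equation
`u_t = u_xx / (1 + u_x²)` on the rectangle `[0,ε] × [T, T+δ]`:
if `u ≥ 0` at the initial time and `u > 0` on the lateral boundary,
then `u > 0` in the interior (up to the final time). -/
theorem max_principle_graphical_CSF
    (ε δ T : ℝ) (hε : 0 < ε) (hδ : 0 < δ)
    (u : ℝ → ℝ → ℝ)
    (hcont : ContinuousOn (fun p : ℝ × ℝ => u p.1 p.2) (Icc 0 ε ×ˢ Icc T (T + δ)))
    (hx : ∀ t ∈ Ioc T (T + δ), ContDiffOn ℝ 2 (fun y => u y t) (Ioo 0 ε))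
    (ht : ∀ x ∈ Ioo 0 ε, DifferentiableOn ℝ (fun s => u x s) (Ioc T (T + δ)))
    (heq : ∀ x ∈ Ioo 0 ε, ∀ t ∈ Ioc T (T + δ),
      deriv (fun s => u x s) t =
        deriv (deriv (fun y => u y t)) x / (1 + (deriv (fun y => u y t) x) ^ 2))
    (hinit : ∀ x ∈ Icc 0 ε, 0 ≤ u x T)
    (hleft : ∀ t ∈ Ioc T (T + δ), 0 < u 0 t)
    (hright : ∀ t ∈ Icc T (T + δ), 0 < u ε t) :
    ∀ x ∈ Ioo 0 ε, ∀ t ∈ Ioc T (T + δ), 0 < u x t := by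
  intro x₀ hx₀ t₀ ht₀
  -- continuity of slices in time
  have hsub : ∀ x ∈ Icc 0 ε, ContinuousOn (fun t => u x t) (Icc T (T + δ)) := by
    intro x hxm
    exact hcont.comp ((continuous_const.prodMk continuous_id).continuousOn)
      (fun t htm => ⟨hxm, htm⟩)
  -- positive minimum on the right lateral boundary
  obtain ⟨m, hm0, hmle⟩ : ∃ m : ℝ, 0 < m ∧ ∀ t ∈ Icc T (T + δ), m ≤ u ε t := by
    obtain ⟨tm, htm, hmm⟩ := isCompact_Icc.exists_isMinOn (nonempty_Icc.2 (by linarith))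
      (hsub ε (right_mem_Icc.2 hε.le))
    exact ⟨u ε tm, hright tm htm, fun t h => isMinOn_iff.1 hmm t h⟩
  have hd0 : (0:ℝ) < t₀ - T := sub_pos.2 ht₀.1
  -- constants for the barrier
  obtain ⟨c, hc0, hcm⟩ : ∃ c : ℝ, 0 < c ∧ c ≤ m := ⟨m, hm0, le_refl m⟩
  obtain ⟨β, hβ1, hβkey⟩ : ∃ β : ℝ, 1 ≤ β ∧ ε / (t₀ - T) * (1 + c ^ 2) < β :=
    ⟨max 1 (ε / (t₀ - T) * (1 + c ^ 2) + 1), le_max_left _ _,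
      lt_of_lt_of_le (lt_add_one _) (le_max_right _ _)⟩
  have hβ0 : (0:ℝ) < β := lt_of_lt_of_le one_pos hβ1
  obtain ⟨γ, hγ0, hγd⟩ : ∃ γ : ℝ, 0 < γ ∧ γ * (t₀ - T) = β * ε :=
    ⟨β * ε / (t₀ - T), div_pos (mul_pos hβ0 hε) hd0, by field_simp⟩
  obtain ⟨A, hA0, hAexp⟩ : ∃ A : ℝ, 0 < A ∧ A * β * Real.exp (β * ε) = c :=
    ⟨c / (β * Real.exp (β * ε)), by positivity,
      by rw [div_mul_eq_mul_div, div_mul_eq_mul_div, div_eq_iff (by positivity)]; ring⟩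
  set w : ℝ → ℝ → ℝ := fun x t => A * (Real.exp (β * (x - ε) + γ * (t - T)) - 1) with hw
  -- derivatives of the barrier
  have hwx : ∀ t y : ℝ, HasDerivAt (fun z => w z t)
      (A * β * Real.exp (β * (y - ε) + γ * (t - T))) y := by
    intro t y
    have h1 : HasDerivAt (fun z : ℝ => β * (z - ε) + γ * (t - T)) β y := by
      simpa using (((hasDerivAt_id y).sub_const ε).const_mul β).add_const (γ * (t - T))
    have h2 := (h1.exp.sub_const 1).const_mul A
    simp only [hw]
    convert h2 using 1
    all_goals first | rfl | ring
  have hwxx : ∀ t y : ℝ, HasDerivAt (fun z => A * β * Real.exp (β * (z - ε) + γ * (t - T)))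
      (A * β * β * Real.exp (β * (y - ε) + γ * (t - T))) y := by
    intro t y
    have h1 : HasDerivAt (fun z : ℝ => β * (z - ε) + γ * (t - T)) β y := by
      simpa using (((hasDerivAt_id y).sub_const ε).const_mul β).add_const (γ * (t - T))
    have h2 := h1.exp.const_mul (A * β)
    convert h2 using 1
    all_goals first | rfl | ring
  have hwt : ∀ y t : ℝ, HasDerivAt (fun s => w y s)
      (A * γ * Real.exp (β * (y - ε) + γ * (t - T))) t := by
    intro y t
    have h1 : HasDerivAt (fun s : ℝ => β * (y - ε) + γ * (s - T)) γ t := by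
      simpa using ((((hasDerivAt_id t).sub_const T).const_mul γ).const_add (β * (y - ε)))
    have h2 := (h1.exp.sub_const 1).const_mul A
    simp only [hw]
    convert h2 using 1
    all_goals first | rfl | ring
  -- the comparison principle on [0,ε] × [T,t₁] for t₁ < t₀
  have hcomp : ∀ t₁, T < t₁ → t₁ < t₀ → ∀ x ∈ Icc 0 ε, ∀ t ∈ Icc T t₁, w x t ≤ u x t := by
    intro t₁ ht₁a ht₁b
    have ht₁δ : t₁ < T + δ := by
      have := ht₀.2; linarith
    have hθle : ∀ x t : ℝ, x ≤ ε → T ≤ t → t ≤ t₁ → β * (x - ε) + γ * (t - T) ≤ β * ε := by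
      intro x t h1 h2 h3
      have e1 : β * (x - ε) ≤ 0 := mul_nonpos_of_nonneg_of_nonpos hβ0.le (by linarith)
      have e2 : γ * (t - T) ≤ γ * (t₀ - T) := by
        apply mul_le_mul_of_nonneg_left _ hγ0.le
        linarith
      linarith [hγd]
    set F : ℝ × ℝ → ℝ := fun p => u p.1 p.2 - w p.1 p.2 with hF
    have hQsub : Icc (0:ℝ) ε ×ˢ Icc T t₁ ⊆ Icc (0:ℝ) ε ×ˢ Icc T (T + δ) :=
      prod_mono_right (Icc_subset_Icc_right (by linarith))
    have hFc : ContinuousOn F (Icc 0 ε ×ˢ Icc T t₁) := by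
      apply (hcont.mono hQsub).sub
      apply Continuous.continuousOn
      simp only [hw]; fun_prop
    obtain ⟨⟨xs, ts⟩, hpQ, hpmin⟩ := (isCompact_Icc.prod isCompact_Icc).exists_isMinOn
      ⟨(0, T), ⟨⟨le_refl 0, hε.le⟩, ⟨le_refl T, ht₁a.le⟩⟩⟩ hFc
    have hmin' : ∀ q ∈ Icc (0:ℝ) ε ×ˢ Icc T t₁, F (xs, ts) ≤ F q :=
      fun q hq => isMinOn_iff.1 hpmin q hq
    simp only [Set.mem_prod, Set.mem_Icc] at hpQ
    obtain ⟨⟨hp1a, hp1b⟩, hp2a, hp2b⟩ := hpQ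
    suffices hok : 0 ≤ F (xs, ts) by
      intro x hxm t htm
      have := hmin' (x, t) ⟨hxm, htm⟩
      simp only [hF] at this hok
      linarith
    by_contra hneg
    push_neg at hneg
    -- the minimum is not on the parabolic boundary
    have hne0 : xs ≠ 0 := by
      intro h0
      apply absurd hneg (not_lt.2 _)
      have hu0 : 0 ≤ u 0 ts := by
        rcases eq_or_lt_of_le hp2a with h | h
        · rw [← h]; exact hinit 0 ⟨le_refl 0, hε.le⟩
        · exact (hleft ts ⟨h, by linarith⟩).le
      have hw0 : w 0 ts ≤ 0 := by
        have : β * ((0:ℝ) - ε) + γ * (ts - T) ≤ 0 := by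
          have := hθle ε ts (le_refl ε) hp2a hp2b
          have e1 : β * ((0:ℝ) - ε) = β * (ε - ε) - β * ε := by ring
          nlinarith [hθle 0 ts hε.le hp2a hp2b, hβ0, hε]
        simp only [hw]
        have := Real.exp_le_one_iff.2 this
        nlinarith [hA0]
      simp only [hF, h0]
      linarith
    have hneε : xs ≠ ε := by
      intro h0
      apply absurd hneg (not_lt.2 _)
      have hu0 : m ≤ u ε ts := hmle ts ⟨hp2a, by linarith⟩
      have hwε : w ε ts ≤ m := by
        simp only [hw]
        have h1 : Real.exp (β * (ε - ε) + γ * (ts - T)) ≤ Real.exp (β * ε) :=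
          Real.exp_le_exp.2 (hθle ε ts (le_refl ε) hp2a hp2b)
        have h2 : A * Real.exp (β * ε) ≤ c := by
          nlinarith [hAexp, mul_nonneg hA0.le (Real.exp_pos (β * ε)).le, hβ1]
        nlinarith [hA0, hcm]
      simp only [hF, h0]
      linarith
    have hneT : ts ≠ T := by
      intro h0
      apply absurd hneg (not_lt.2 _)
      have hwT : w xs T ≤ 0 := by
        simp only [hw]
        have : β * (xs - ε) + γ * (T - T) ≤ 0 := by
          have : β * (xs - ε) ≤ 0 := mul_nonpos_of_nonneg_of_nonpos hβ0.le (by linarith)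
          simpa using this
        have := Real.exp_le_one_iff.2 this
        nlinarith [hA0]
      simp only [hF, h0]
      have := hinit xs ⟨hp1a, hp1b⟩
      linarith
    have hxsIoo : xs ∈ Ioo 0 ε := ⟨lt_of_le_of_ne hp1a (Ne.symm hne0), lt_of_le_of_ne hp1b hneε⟩
    have htslt : ts < T + δ := lt_of_le_of_lt hp2b ht₁δ
    have hts : ts ∈ Ioc T (T + δ) := ⟨lt_of_le_of_ne hp2a (Ne.symm hneT), htslt.le⟩
    -- spatial derivatives at the minimum
    have hmem : Ioo (0:ℝ) ε ∈ 𝓝 xs := isOpen_Ioo.mem_nhds hxsIoo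
    have hgC : ContDiffOn ℝ 2 (fun y => u y ts) (Ioo 0 ε) := hx ts hts
    have hgd : ∀ y ∈ Ioo (0:ℝ) ε, DifferentiableAt ℝ (fun y => u y ts) y := fun y hy =>
      (hgC.differentiableOn (by norm_num)).differentiableAt (isOpen_Ioo.mem_nhds hy)
    have hg'd : DifferentiableAt ℝ (deriv (fun y => u y ts)) xs :=
      (((hgC.deriv_of_isOpen (m := 1) isOpen_Ioo (by norm_num)).differentiableOn
        one_ne_zero).differentiableAt hmem)
    set E := Real.exp (β * (xs - ε) + γ * (ts - T)) with hE
    have hE0 : 0 < E := Real.exp_pos _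
    have hEle : E ≤ Real.exp (β * ε) :=
      Real.exp_le_exp.2 (hθle xs ts hp1b hp2a hp2b)
    have hGmin : IsLocalMin (fun y => u y ts - w y ts) xs := by
      have : ∀ᶠ y in 𝓝 xs, (fun y => u y ts - w y ts) xs ≤ (fun y => u y ts - w y ts) y := by
        filter_upwards [hmem] with y hy
        exact hmin' (y, ts) ⟨Ioo_subset_Icc_self hy, hp2a, hp2b⟩
      exact this
    have hGd : ∀ᶠ y in 𝓝 xs, DifferentiableAt ℝ (fun y => u y ts - w y ts) y := by
      filter_upwards [hmem] with y hy
      exact (hgd y hy).sub (hwx ts y).differentiableAt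
    have hG'eq : deriv (fun y => u y ts - w y ts) =ᶠ[𝓝 xs]
        fun y => deriv (fun y => u y ts) y - A * β * Real.exp (β * (y - ε) + γ * (ts - T)) := by
      filter_upwards [hmem] with y hy
      rw [deriv_fun_sub (hgd y hy) (hwx ts y).differentiableAt, (hwx ts y).deriv]
    have hG'd : DifferentiableAt ℝ (deriv (fun y => u y ts - w y ts)) xs := by
      have hd1 : DifferentiableAt ℝ
          (fun y => deriv (fun y => u y ts) y - A * β * Real.exp (β * (y - ε) + γ * (ts - T)))
          xs := hg'd.sub (hwxx ts xs).differentiableAt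
      exact (hG'eq.differentiableAt_iff).2 hd1
    have hfirst : deriv (fun y => u y ts - w y ts) xs = 0 := hGmin.deriv_eq_zero
    have hderivG : deriv (fun y => u y ts - w y ts) xs
        = deriv (fun y => u y ts) xs - A * β * E := by
      rw [deriv_fun_sub (hgd xs hxsIoo) (hwx ts xs).differentiableAt, (hwx ts xs).deriv]
    have hP : deriv (fun y => u y ts) xs = A * β * E := by
      rw [hderivG] at hfirst; linarith
    have hsecond : 0 ≤ deriv (deriv (fun y => u y ts - w y ts)) xs :=
      second_deriv_nonneg_of_isLocalMin hGmin hGd hG'd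
    have hderiv2 : deriv (deriv (fun y => u y ts - w y ts)) xs
        = deriv (deriv (fun y => u y ts)) xs - A * β * β * E := by
      rw [hG'eq.deriv_eq, deriv_fun_sub hg'd (hwxx ts xs).differentiableAt, (hwxx ts xs).deriv]
    have hUxx : A * β * β * E ≤ deriv (deriv (fun y => u y ts)) xs := by
      rw [hderiv2] at hsecond; linarith
    -- time derivative at the minimum
    have htdiff : DifferentiableAt ℝ (fun s => u xs s) ts := by
      apply ((ht xs hxsIoo) ts hts).differentiableAt
      exact mem_nhds_iff.2 ⟨Ioo T (T + δ), Ioo_subset_Ioc_self, isOpen_Ioo, ⟨hts.1, htslt⟩⟩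
    have hφd : DifferentiableAt ℝ (fun s => u xs s - w xs s) ts :=
      htdiff.sub (hwt xs ts).differentiableAt
    have hφmin : ∀ s ∈ Ioc T ts, (fun s => u xs s - w xs s) ts ≤ (fun s => u xs s - w xs s) s := by
      intro s hs
      exact hmin' (xs, s) ⟨⟨hp1a, hp1b⟩, hs.1.le, hs.2.trans hp2b⟩
    have hφ' : deriv (fun s => u xs s - w xs s) ts ≤ 0 :=
      deriv_nonpos_of_isMinOn_Ioc hts.1 hφd hφmin
    have hderivφ : deriv (fun s => u xs s - w xs s) ts
        = deriv (fun s => u xs s) ts - A * γ * E := by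
      rw [deriv_fun_sub htdiff (hwt xs ts).differentiableAt, (hwt xs ts).deriv]
    have hUt : deriv (fun s => u xs s) ts ≤ A * γ * E := by
      rw [hderivφ] at hφ'; linarith
    -- the PDE at the minimum yields a contradiction
    have hpde := heq xs hxsIoo ts hts
    rw [hP] at hpde
    have hPle : A * β * E ≤ c := by
      calc A * β * E ≤ A * β * Real.exp (β * ε) :=
            mul_le_mul_of_nonneg_left hEle (by positivity)
        _ = c := hAexp
    have h1P : (0:ℝ) < 1 + (A * β * E) ^ 2 := by positivity
    have hγβ : γ * (1 + (A * β * E) ^ 2) < β * β := by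
      have h2 : (A * β * E) ^ 2 ≤ c ^ 2 := by
        nlinarith [hPle, mul_pos (mul_pos hA0 hβ0) hE0]
      have h3 : γ * (1 + (A * β * E) ^ 2) ≤ γ * (1 + c ^ 2) := by nlinarith [hγ0]
      have h4 : γ * (1 + c ^ 2) < β * β := by
        have h5 : γ = β * (ε / (t₀ - T)) := by
          field_simp
          linarith [hγd]
        rw [h5]
        calc β * (ε / (t₀ - T)) * (1 + c ^ 2) = β * (ε / (t₀ - T) * (1 + c ^ 2)) := by ring
          _ < β * β := by nlinarith [hβkey, hβ0]
      linarith
    have hD : deriv (fun s => u xs s) ts * (1 + (A * β * E) ^ 2)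
        = deriv (deriv (fun y => u y ts)) xs := by
      rw [hpde]; field_simp
    have hchain : A * β * β * E ≤ A * γ * E * (1 + (A * β * E) ^ 2) := by
      have := mul_le_mul_of_nonneg_right hUt h1P.le
      rw [hD] at this
      linarith [hUxx]
    have hcontra : A * γ * E * (1 + (A * β * E) ^ 2) < A * β * β * E := by
      have hAE : 0 < A * E := mul_pos hA0 hE0
      nlinarith [hγβ, hAE]
    linarith
  -- pass to the limit t → t₀⁻
  have hkey : ∀ t ∈ Ioo T t₀, w x₀ t ≤ u x₀ t := by
    intro t htI
    exact hcomp t htI.1 htI.2 x₀ (Ioo_subset_Icc_self hx₀) t ⟨htI.1.le, le_refl t⟩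
  haveI : (𝓝[Ioo T t₀] t₀).NeBot := right_nhdsWithin_Ioo_neBot ht₀.1
  have hu0 : Tendsto (fun t => u x₀ t) (𝓝[Ioo T t₀] t₀) (𝓝 (u x₀ t₀)) := by
    have hc : ContinuousWithinAt (fun t => u x₀ t) (Icc T (T + δ)) t₀ :=
      (hsub x₀ (Ioo_subset_Icc_self hx₀)) t₀ ⟨ht₀.1.le, ht₀.2⟩
    exact hc.tendsto.mono_left (nhdsWithin_mono _ (fun t htI => ⟨htI.1.le, htI.2.le.trans ht₀.2⟩))
  have hw0 : Tendsto (fun t => w x₀ t) (𝓝[Ioo T t₀] t₀) (𝓝 (w x₀ t₀)) := by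
    have : Continuous (fun t => w x₀ t) := by simp only [hw]; fun_prop
    exact (this.tendsto t₀).mono_left nhdsWithin_le_nhds
  have hfin : w x₀ t₀ ≤ u x₀ t₀ := by
    refine le_of_tendsto_of_tendsto hw0 hu0 ?_
    filter_upwards [eventually_mem_nhdsWithin] with t htI
    exact hkey t htI
  have hwpos : 0 < w x₀ t₀ := by
    have hθ₀ : β * (x₀ - ε) + γ * (t₀ - T) = β * x₀ := by
      linarith [hγd]
    have h2 : (1:ℝ) < Real.exp (β * (x₀ - ε) + γ * (t₀ - T)) := by
      rw [hθ₀]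
      have := Real.exp_lt_exp.2 (show (0:ℝ) < β * x₀ from mul_pos hβ0 hx₀.1)
      rwa [Real.exp_zero] at this
    simp only [hw]
    nlinarith [hA0]
  linarith
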